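/- With Z = e^ε cosh(h_+) + e^{-ε} cosh(h_-), the determinant of the Hessian of π_ε(h_+,h_-) = log(2Z) equals Z^{-4}·(1 + 2cosh(2ε)cosh(h_+)cosh(h_-) + cosh²(h_+)cosh²(h_-) − sinh²(h_+)sinh²(h_-)), and this quantity is strictly positive. -/

import Mathlib

noncomputable def piE (ε h₁ h₂ : ℝ) : ℝ :=
  Real.log (2 * (Real.exp ε * Real.cosh h₁ + Real.exp (-ε) * Real.cosh h₂))

noncomputable def piE1 (ε : ℝ) (h : ℝ × ℝ) : ℝ := deriv (fun x => piE ε x h.2) h.1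
noncomputable def piE2 (ε : ℝ) (h : ℝ × ℝ) : ℝ := deriv (fun y => piE ε h.1 y) h.2

/-- The Hessian matrix of `π_ε` at the point `h = (h₊, h₋)`. -/
noncomputable def hessPiE (ε : ℝ) (h : ℝ × ℝ) : Matrix (Fin 2) (Fin 2) ℝ :=
  !![deriv (fun x => piE1 ε (x, h.2)) h.1, deriv (fun y => piE1 ε (h.1, y)) h.2;
     deriv (fun x => piE2 ε (x, h.2)) h.1, deriv (fun y => piE2 ε (h.1, y)) h.2]

lemma Zpos (ε x y : ℝ) : 0 < Real.exp ε * Real.cosh x + Real.exp (-ε) * Real.cosh y :=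
  add_pos (mul_pos (Real.exp_pos _) (Real.cosh_pos _)) (mul_pos (Real.exp_pos _) (Real.cosh_pos _))

lemma hasDerivAt_Z (ε y x : ℝ) :
    HasDerivAt (fun x => Real.exp ε * Real.cosh x + Real.exp (-ε) * Real.cosh y)
      (Real.exp ε * Real.sinh x) x :=
  ((Real.hasDerivAt_cosh x).const_mul (Real.exp ε)).add_const _

lemma hasDerivAt_piE_x (ε y x : ℝ) :
    HasDerivAt (fun x => piE ε x y)
      (Real.exp ε * Real.sinh x / (Real.exp ε * Real.cosh x + Real.exp (-ε) * Real.cosh y)) x := by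
  have h2 := (((hasDerivAt_Z ε y x).const_mul 2).log
    (by have := Zpos ε x y; positivity))
  have : (2 * (Real.exp ε * Real.sinh x)) / (2 * (Real.exp ε * Real.cosh x + Real.exp (-ε) * Real.cosh y))
      = Real.exp ε * Real.sinh x / (Real.exp ε * Real.cosh x + Real.exp (-ε) * Real.cosh y) :=
    mul_div_mul_left _ _ two_ne_zero
  rw [← this]
  exact h2

lemma piE1_eq (ε x y : ℝ) :
    piE1 ε (x, y) = Real.exp ε * Real.sinh x /
      (Real.exp ε * Real.cosh x + Real.exp (-ε) * Real.cosh y) :=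
  (hasDerivAt_piE_x ε y x).deriv

lemma hasDerivAt_piE_y (ε x y : ℝ) :
    HasDerivAt (fun y => piE ε x y)
      (Real.exp (-ε) * Real.sinh y / (Real.exp ε * Real.cosh x + Real.exp (-ε) * Real.cosh y)) y := by
  have h1 : HasDerivAt (fun y => Real.exp ε * Real.cosh x + Real.exp (-ε) * Real.cosh y)
      (Real.exp (-ε) * Real.sinh y) y := by
    simpa using ((Real.hasDerivAt_cosh y).const_mul (Real.exp (-ε))).const_add
      (Real.exp ε * Real.cosh x)
  have h2 := ((h1.const_mul 2).log (by have := Zpos ε x y; positivity))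
  have : (2 * (Real.exp (-ε) * Real.sinh y)) / (2 * (Real.exp ε * Real.cosh x + Real.exp (-ε) * Real.cosh y))
      = Real.exp (-ε) * Real.sinh y / (Real.exp ε * Real.cosh x + Real.exp (-ε) * Real.cosh y) :=
    mul_div_mul_left _ _ two_ne_zero
  rw [← this]
  exact h2

lemma piE2_eq (ε x y : ℝ) :
    piE2 ε (x, y) = Real.exp (-ε) * Real.sinh y /
      (Real.exp ε * Real.cosh x + Real.exp (-ε) * Real.cosh y) :=
  (hasDerivAt_piE_y ε x y).deriv

theorem hessian_det_formula_and_pos (ε : ℝ) (hε : 0 ≤ ε) (h : ℝ × ℝ)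
    (Z : ℝ) (hZ : Z = Real.exp ε * Real.cosh h.1 + Real.exp (-ε) * Real.cosh h.2) :
    (hessPiE ε h).det =
      Z ^ (-4 : ℤ) *
        (1 + 2 * Real.cosh (2 * ε) * Real.cosh h.1 * Real.cosh h.2 +
          Real.cosh h.1 ^ 2 * Real.cosh h.2 ^ 2 -
          Real.sinh h.1 ^ 2 * Real.sinh h.2 ^ 2) ∧
      0 < (hessPiE ε h).det := by
  obtain ⟨x, y⟩ := h
  simp only at hZ ⊢
  set A := Real.exp ε with hA
  set B := Real.exp (-ε) with hB
  have hZ0 : 0 < Z := hZ ▸ Zpos ε x y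
  have hAB : A * B = 1 := by rw [hA, hB, ← Real.exp_add]; simp
  -- second derivatives
  have d11 : deriv (fun x => piE1 ε (x, y)) x =
      (A * Real.cosh x * Z - (A * Real.sinh x) ^ 2) / Z ^ 2 := by
    have hfun : (fun x => piE1 ε (x, y)) =
        fun x => A * Real.sinh x / (A * Real.cosh x + B * Real.cosh y) := by
      funext t; exact piE1_eq ε t y
    rw [hfun]
    have hd := ((Real.hasDerivAt_sinh x).const_mul A).div (hasDerivAt_Z ε y x)
      (ne_of_gt (Zpos ε x y))
    rw [HasDerivAt.deriv (f := fun x => A * Real.sinh x / (A * Real.cosh x + B * Real.cosh y)) hd, hZ]; ring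
  have d22 : deriv (fun y => piE2 ε (x, y)) y =
      (B * Real.cosh y * Z - (B * Real.sinh y) ^ 2) / Z ^ 2 := by
    have hfun : (fun y => piE2 ε (x, y)) =
        fun y => B * Real.sinh y / (A * Real.cosh x + B * Real.cosh y) := by
      funext t; exact piE2_eq ε x t
    rw [hfun]
    have h1 : HasDerivAt (fun y => A * Real.cosh x + B * Real.cosh y) (B * Real.sinh y) y := by
      simpa using ((Real.hasDerivAt_cosh y).const_mul B).const_add (A * Real.cosh x)
    have hd := ((Real.hasDerivAt_sinh y).const_mul B).div h1 (ne_of_gt (Zpos ε x y))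
    rw [HasDerivAt.deriv (f := fun y => B * Real.sinh y / (A * Real.cosh x + B * Real.cosh y)) hd, hZ]; ring
  have d12 : deriv (fun t => piE1 ε (x, t)) y =
      -(A * Real.sinh x * (B * Real.sinh y)) / Z ^ 2 := by
    have hfun : (fun t => piE1 ε (x, t)) =
        fun t => A * Real.sinh x / (A * Real.cosh x + B * Real.cosh t) := by
      funext t; exact piE1_eq ε x t
    rw [hfun]
    have h1 : HasDerivAt (fun t => A * Real.cosh x + B * Real.cosh t) (B * Real.sinh y) y := by
      simpa using ((Real.hasDerivAt_cosh y).const_mul B).const_add (A * Real.cosh x)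
    have hd := (hasDerivAt_const y (A * Real.sinh x)).div h1 (ne_of_gt (Zpos ε x y))
    rw [HasDerivAt.deriv (f := fun t => A * Real.sinh x / (A * Real.cosh x + B * Real.cosh t)) hd, hZ]; ring
  have d21 : deriv (fun t => piE2 ε (t, y)) x =
      -(B * Real.sinh y * (A * Real.sinh x)) / Z ^ 2 := by
    have hfun : (fun t => piE2 ε (t, y)) =
        fun t => B * Real.sinh y / (A * Real.cosh t + B * Real.cosh y) := by
      funext t; exact piE2_eq ε t y
    rw [hfun]
    have h1 : HasDerivAt (fun t => A * Real.cosh t + B * Real.cosh y) (A * Real.sinh x) x := by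
      simpa using ((Real.hasDerivAt_cosh x).const_mul A).add_const (B * Real.cosh y)
    have hd := (hasDerivAt_const x (B * Real.sinh y)).div h1 (ne_of_gt (Zpos ε x y))
    rw [HasDerivAt.deriv (f := fun t => B * Real.sinh y / (A * Real.cosh t + B * Real.cosh y)) hd, hZ]; ring
  have hdet : (hessPiE ε (x, y)).det =
      ((A * Real.cosh x * Z - (A * Real.sinh x) ^ 2) *
        (B * Real.cosh y * Z - (B * Real.sinh y) ^ 2) -
        (A * Real.sinh x * (B * Real.sinh y)) ^ 2) / Z ^ 4 := by
    rw [hessPiE, Matrix.det_fin_two_of, d11, d22, d12, d21]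
    field_simp
  have key : (A * Real.cosh x * Z - (A * Real.sinh x) ^ 2) *
        (B * Real.cosh y * Z - (B * Real.sinh y) ^ 2) -
        (A * Real.sinh x * (B * Real.sinh y)) ^ 2 =
      Z * (A * Real.cosh y + B * Real.cosh x) := by
    have hSx : Real.sinh x ^ 2 = Real.cosh x ^ 2 - 1 := Real.sinh_sq x
    have hSy : Real.sinh y ^ 2 = Real.cosh y ^ 2 - 1 := Real.sinh_sq y
    rw [hZ]
    linear_combination
      (A * B * Real.cosh x ^ 2 + A * B * Real.cosh y ^ 2 + A ^ 2 * Real.cosh x * Real.cosh y +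
        B ^ 2 * Real.cosh x * Real.cosh y) * hAB +
      (-(A ^ 3 * B * Real.cosh x * Real.cosh y) - A ^ 2 * B ^ 2 * Real.cosh y ^ 2) * hSx +
      (-(A ^ 2 * B ^ 2 * Real.cosh x ^ 2) - A * B ^ 3 * Real.cosh x * Real.cosh y) * hSy
  have hpar : 1 + 2 * Real.cosh (2 * ε) * Real.cosh x * Real.cosh y +
        Real.cosh x ^ 2 * Real.cosh y ^ 2 - Real.sinh x ^ 2 * Real.sinh y ^ 2 =
      Z * (A * Real.cosh y + B * Real.cosh x) := by
    have h2 : 2 * Real.cosh (2 * ε) = A ^ 2 + B ^ 2 := by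
      rw [Real.cosh_eq, hA, hB, show (2 : ℝ) * ε = ε + ε by ring, Real.exp_add, neg_add,
        Real.exp_add]
      ring
    have hSx : Real.sinh x ^ 2 = Real.cosh x ^ 2 - 1 := Real.sinh_sq x
    have hSy : Real.sinh y ^ 2 = Real.cosh y ^ 2 - 1 := Real.sinh_sq y
    rw [hZ]
    linear_combination Real.cosh x * Real.cosh y * h2 +
      (-(Real.cosh x ^ 2) - Real.cosh y ^ 2) * hAB +
      (-(Real.sinh y ^ 2)) * hSx + (-(Real.cosh x ^ 2 - 1)) * hSy
  have hZpow : Z ^ (-4 : ℤ) = (Z ^ 4)⁻¹ := by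
    rw [zpow_neg, zpow_ofNat]
  constructor
  · rw [hdet, key, hpar, hZpow, inv_mul_eq_div]
  · rw [hdet, key]
    have : 0 < A * Real.cosh y + B * Real.cosh x :=
      add_pos (mul_pos (Real.exp_pos _) (Real.cosh_pos _)) (mul_pos (Real.exp_pos _) (Real.cosh_pos _))
    positivity
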